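/- Let p⃗ be a 1×r vector polynomial of degree at most m and v : ℤ → ℂ^{1×r} a finitely supported vector sequence. Then p⃗ = (·)^m/m! * v (i.e., p⃗(x) = ∑_{k∈ℤ} ((x−k)^m/m!) v(k)) if and only if v̂^{(j)}(0) = j! · i^j · p⃗^{(m−j)}(0) for all j = 0, 1, …, m. -/

import Mathlib

open Complex Polynomial

/-- Symbol (Fourier series) of a sequence `u : ℤ → ℂ`. -/
noncomputable def symb (u : ℤ → ℂ) (ξ : ℂ) : ℂ :=
  ∑ᶠ k : ℤ, u k * Complex.exp (-Complex.I * k * ξ)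

/-- Convolution of a polynomial with a finitely supported sequence, as a polynomial. -/
noncomputable def pconv (q : Polynomial ℂ) (u : ℤ → ℂ) : Polynomial ℂ :=
  ∑ᶠ k : ℤ, u k • (q.comp (Polynomial.X - Polynomial.C (k : ℂ)))

lemma auxIteratedDerivSum {ι : Type*} (s : Finset ι) (f : ι → ℂ → ℂ) (n : ℕ)
    (h : ∀ j ∈ s, ContDiff ℂ n (f j)) (x : ℂ) :
    iteratedDeriv n (fun ξ => ∑ j ∈ s, f j ξ) x = ∑ j ∈ s, iteratedDeriv n (f j) x := by
  simp only [iteratedDeriv_eq_iteratedFDeriv]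
  rw [iteratedFDeriv_sum h]
  simp

lemma symb_iter (u : ℤ → ℂ) (S : Finset ℤ) (hS : Function.support u ⊆ S) (j : ℕ) :
    iteratedDeriv j (symb u) 0 = ∑ k ∈ S, u k * (-Complex.I * (k : ℂ)) ^ j := by
  have h1 : symb u = fun ξ => ∑ k ∈ S, u k * Complex.exp (-Complex.I * (k : ℂ) * ξ) := by
    funext ξ
    refine finsum_eq_sum_of_support_subset _ ?_
    intro k hk
    apply hS
    simp only [Function.mem_support] at hk ⊢
    intro h0
    apply hk
    simp [h0]
  rw [h1, auxIteratedDerivSum]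
  · refine Finset.sum_congr rfl fun k _ => ?_
    have hc : ContDiff ℂ j fun ξ : ℂ => Complex.exp (-Complex.I * (k : ℂ) * ξ) :=
      Complex.contDiff_exp.comp (contDiff_const.mul contDiff_id)
    have hmul := iteratedDerivWithin_const_mul (s := Set.univ) (x := (0 : ℂ))
      (Set.mem_univ 0) uniqueDiffOn_univ (u k) hc.contDiffWithinAt
    simp only [iteratedDerivWithin_univ] at hmul
    rw [hmul, congrFun (iteratedDeriv_cexp_const_mul j (-Complex.I * (k : ℂ))) 0]
    simp
  · intro k _
    exact contDiff_const.mul (Complex.contDiff_exp.comp (contDiff_const.mul contDiff_id))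

lemma iterDerivSum {ι : Type*} (s : Finset ι) (f : ι → Polynomial ℂ) (n : ℕ) :
    Polynomial.derivative^[n] (∑ k ∈ s, f k) = ∑ k ∈ s, Polynomial.derivative^[n] (f k) := by
  induction n with
  | zero => simp
  | succ n ih =>
    rw [Function.iterate_succ_apply', ih, map_sum]
    exact Finset.sum_congr rfl fun k _ => (Function.iterate_succ_apply' _ _ _).symm

lemma pconv_eq (m : ℕ) (u : ℤ → ℂ) (S : Finset ℤ) (hS : Function.support u ⊆ S) :
    pconv (Polynomial.C ((Nat.factorial m : ℂ))⁻¹ * Polynomial.X ^ m) u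
      = ∑ k ∈ S, u k • (Polynomial.C ((Nat.factorial m : ℂ))⁻¹
          * (Polynomial.X - Polynomial.C (k : ℂ)) ^ m) := by
  rw [pconv, finsum_eq_sum_of_support_subset]
  · exact Finset.sum_congr rfl fun k _ => by simp [mul_comp, pow_comp]
  · intro k hk
    apply hS
    simp only [Function.mem_support] at hk ⊢
    intro h0
    apply hk
    simp [h0]

lemma pconv_iter_eval (u : ℤ → ℂ) (S : Finset ℤ) (hS : Function.support u ⊆ S)
    (m j : ℕ) (hj : j ≤ m) :
    (Nat.factorial j : ℂ) * Complex.I ^ j *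
      (Polynomial.derivative^[m - j]
        (pconv (Polynomial.C ((Nat.factorial m : ℂ))⁻¹ * Polynomial.X ^ m) u)).eval 0
      = ∑ k ∈ S, u k * (-Complex.I * (k : ℂ)) ^ j := by
  rw [pconv_eq m u S hS, iterDerivSum, Polynomial.eval_finset_sum, Finset.mul_sum]
  refine Finset.sum_congr rfl fun k _ => ?_
  rw [iterate_derivative_smul, iterate_derivative_C_mul, iterate_derivative_X_sub_pow,
    Nat.sub_sub_self hj]
  have hfact : (Nat.factorial j : ℂ) * ((Nat.factorial m : ℂ))⁻¹
      * (m.descFactorial (m - j) : ℂ) = 1 := by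
    have h := Nat.factorial_mul_descFactorial (Nat.sub_le m j)
    rw [Nat.sub_sub_self hj] at h
    have hm : (Nat.factorial m : ℂ) ≠ 0 := Nat.cast_ne_zero.mpr (Nat.factorial_ne_zero m)
    field_simp
    exact_mod_cast h
  simp only [eval_smul, eval_mul, eval_pow, eval_sub, eval_X, eval_C, zero_sub, smul_eq_mul,
    nsmul_eq_mul, Polynomial.eval_natCast]
  linear_combination (u k * Complex.I ^ j * (-(k : ℂ)) ^ j) * hfact

lemma poly_ext_of_derivs (p q : Polynomial ℂ) (m : ℕ) (hp : p.natDegree ≤ m)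
    (hq : q.natDegree ≤ m)
    (h : ∀ i ≤ m, (Polynomial.derivative^[i] p).eval 0 = (Polynomial.derivative^[i] q).eval 0) :
    p = q := by
  have key : ∀ r : Polynomial ℂ, ∀ n : ℕ,
      (Polynomial.derivative^[n] r).eval 0 = (Nat.factorial n : ℂ) * r.coeff n := by
    intro r n
    rw [← Polynomial.coeff_zero_eq_eval_zero, Polynomial.coeff_iterate_derivative, zero_add,
      Nat.descFactorial_self, nsmul_eq_mul]
  ext n
  by_cases hn : n ≤ m
  · have := h n hn
    rw [key, key] at this
    exact mul_left_cancel₀ (Nat.cast_ne_zero.mpr (Nat.factorial_ne_zero n) : (n.factorial : ℂ) ≠ 0)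
      this
  · push_neg at hn
    rw [Polynomial.coeff_eq_zero_of_natDegree_lt (lt_of_le_of_lt hp hn),
      Polynomial.coeff_eq_zero_of_natDegree_lt (lt_of_le_of_lt hq hn)]

/-- `p⃗ = ((·)^m / m!) * v` iff `v̂^{(j)}(0) = j! i^j p⃗^{(m−j)}(0)` for `j = 0,…,m`. -/
theorem stmt3 (r : ℕ) (v : ℤ → Fin r → ℂ) (hv : (Function.support v).Finite)
    (m : ℕ) (P : Fin r → Polynomial ℂ) (hP : ∀ ℓ, (P ℓ).natDegree ≤ m) :
    (∀ ℓ, P ℓ = pconv (Polynomial.C ((Nat.factorial m : ℂ))⁻¹ * Polynomial.X ^ m)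
        (fun k => v k ℓ)) ↔
      ∀ j ≤ m, ∀ ℓ,
        iteratedDeriv j (symb (fun k => v k ℓ)) 0 =
          (Nat.factorial j : ℂ) * Complex.I ^ j *
            (Polynomial.derivative^[m - j] (P ℓ)).eval 0 := by
  classical
  set S : Finset ℤ := hv.toFinset with hSdef
  have hSl : ∀ ℓ, Function.support (fun k => v k ℓ) ⊆ S := by
    intro ℓ k hk
    simp only [Function.mem_support] at hk
    rw [hSdef, Set.Finite.coe_toFinset, Function.mem_support]
    intro h0
    apply hk
    rw [h0]
    rfl
  constructor
  · intro h j hj ℓ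
    rw [h ℓ, symb_iter (fun k => v k ℓ) S (hSl ℓ) j]
    exact (pconv_iter_eval (fun k => v k ℓ) S (hSl ℓ) m j hj).symm
  · intro h ℓ
    set Q : Polynomial ℂ :=
      pconv (Polynomial.C ((Nat.factorial m : ℂ))⁻¹ * Polynomial.X ^ m) (fun k => v k ℓ) with hQ
    have hQdeg : Q.natDegree ≤ m := by
      rw [hQ, pconv_eq m (fun k => v k ℓ) S (hSl ℓ)]
      refine Polynomial.natDegree_sum_le_of_forall_le _ _ fun k _ => ?_
      refine (Polynomial.natDegree_smul_le _ _).trans ?_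
      refine (Polynomial.natDegree_C_mul_le _ _).trans ?_
      rw [Polynomial.natDegree_pow, Polynomial.natDegree_X_sub_C, mul_one]
    refine poly_ext_of_derivs (P ℓ) Q m (hP ℓ) hQdeg ?_
    intro i hi
    have hj : m - i ≤ m := Nat.sub_le m i
    have h1 := h (m - i) hj ℓ
    have h2 := pconv_iter_eval (fun k => v k ℓ) S (hSl ℓ) m (m - i) hj
    have h3 := symb_iter (fun k => v k ℓ) S (hSl ℓ) (m - i)
    beta_reduce at h2 h3 h1
    have h4 := h2.trans (h3.symm.trans h1)
    rw [← hQ, Nat.sub_sub_self hi] at h4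
    have hne : (Nat.factorial (m - i) : ℂ) * Complex.I ^ (m - i) ≠ 0 :=
      mul_ne_zero (Nat.cast_ne_zero.mpr (Nat.factorial_ne_zero _))
        (pow_ne_zero _ Complex.I_ne_zero)
    exact (mul_left_cancel₀ hne h4).symm
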